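/- Let Q be a finite poset. Then Q is connected if and only if the subset max(Q) ∪ min(Q) (the union of the set of maximal elements and the set of minimal elements of Q) is connected as a subset of Q. -/

import Mathlib

open Set

namespace Paper

variable {P : Type*}

/-- The characteristic vector of a subset of `P`, as an element of `ℝ^P`. -/
noncomputable def chi (W : Set P) : P → ℝ := W.indicator 1

/-- A subset `S` of a poset is connected if it is non-empty and any two of its
elements are joined by a finite sequence inside `S` of consecutively comparable
elements. -/
def ConnSub [PartialOrder P] (S : Set P) : Prop :=
  S.Nonempty ∧ ∀ x ∈ S, ∀ y ∈ S,
    Relation.ReflTransGen (fun a b : P => a ∈ S ∧ b ∈ S ∧ (a ≤ b ∨ b ≤ a)) x y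

/-- Up-closure `⟨S⟩↑` of a subset of a poset. -/
def upCl [PartialOrder P] (S : Set P) : Set P := {y | ∃ x ∈ S, x ≤ y}

/-- Down-closure `⟨S⟩↓` of a subset of a poset. -/
def dnCl [PartialOrder P] (S : Set P) : Set P := {y | ∃ x ∈ S, y ≤ x}

/-- Minimal elements of a subset of a poset. -/
def minOf [PartialOrder P] (S : Set P) : Set P := {x | x ∈ S ∧ ∀ y ∈ S, y ≤ x → y = x}

/-- Maximal elements of a subset of a poset. -/
def maxOf [PartialOrder P] (S : Set P) : Set P := {x | x ∈ S ∧ ∀ y ∈ S, x ≤ y → x = y}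

/-- `A ∥ B` : every element of `A` is incomparable to every element of `B`. -/
def IsParallel [PartialOrder P] (A B : Set P) : Prop :=
  ∀ a ∈ A, ∀ b ∈ B, ¬ a ≤ b ∧ ¬ b ≤ a

/-- Order-convexity of a subset of a poset. -/
def OrdConvex [PartialOrder P] (Q : Set P) : Prop :=
  ∀ ⦃x y z : P⦄, x ∈ Q → z ∈ Q → x ≤ y → y ≤ z → y ∈ Q

/-- A poset is `X`-free if it contains no five elements `d₁, d₂ < e < u₁, u₂` with
`d₁ ∥ d₂` and `u₁ ∥ u₂`. -/
def XFree (P : Type*) [PartialOrder P] : Prop :=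
  ¬ ∃ d₁ d₂ e u₁ u₂ : P, d₁ < e ∧ d₂ < e ∧ e < u₁ ∧ e < u₂ ∧
      ¬ d₁ ≤ d₂ ∧ ¬ d₂ ≤ d₁ ∧ ¬ u₁ ≤ u₂ ∧ ¬ u₂ ≤ u₁

/-- The order polytope of a poset. -/
def orderPolytope (P : Type*) [PartialOrder P] : Set (P → ℝ) :=
  {x | (∀ p : P, 0 ≤ x p ∧ x p ≤ 1) ∧ ∀ p q : P, p ≤ q → x p ≤ x q}

/-- The chain polytope of a finite poset. -/
def chainPolytope (P : Type*) [Fintype P] [PartialOrder P] : Set (P → ℝ) :=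
  {x | (∀ p : P, 0 ≤ x p) ∧
       ∀ c : Finset P, IsChain (· ≤ ·) (↑c : Set P) → ∑ p ∈ c, x p ≤ 1}

/-- The dimension of a subset of a real vector space: the dimension of its affine span. -/
noncomputable def sdim {V : Type*} [AddCommGroup V] [Module ℝ V] (s : Set V) : ℕ :=
  Module.finrank ℝ (vectorSpan ℝ s)

/-- `F` is a face of the polytope `K`. -/
def IsFaceOf {V : Type*} [AddCommGroup V] [Module ℝ V] (K F : Set V) : Prop :=
  IsExtreme ℝ K F

/-- `T` is a triangular 2-dimensional face of `K`. -/
def IsTriangleFaceOf {V : Type*} [AddCommGroup V] [Module ℝ V] (K T : Set V) : Prop :=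
  IsFaceOf K T ∧ sdim T = 2 ∧ (Set.extremePoints ℝ T).ncard = 3

/-- `T` is a square 2-dimensional face of `K`. -/
def IsSquareFaceOf {V : Type*} [AddCommGroup V] [Module ℝ V] (K T : Set V) : Prop :=
  IsFaceOf K T ∧ sdim T = 2 ∧ (Set.extremePoints ℝ T).ncard = 4

/-- `T` is a 2-dimensional face of `K`. -/
def IsTwoFaceOf {V : Type*} [AddCommGroup V] [Module ℝ V] (K T : Set V) : Prop :=
  IsFaceOf K T ∧ sdim T = 2

end Paper

open Paper

section Aux

variable {Q : Type} [Fintype Q] [PartialOrder Q]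

private lemma exists_max_above (a : Q) : ∃ m, a ≤ m ∧ m ∈ maxOf (Set.univ : Set Q) := by
  obtain ⟨m, hm, ham⟩ := Set.Finite.exists_maximalFor id {x : Q | a ≤ x} (Set.toFinite _) ⟨a, le_refl a⟩
  exact ⟨m, hm, Set.mem_univ m, fun y _ hy => le_antisymm hy (ham (le_trans hm hy) hy)⟩

private lemma exists_min_below (a : Q) : ∃ m, m ≤ a ∧ m ∈ minOf (Set.univ : Set Q) := by
  obtain ⟨m, hm, ham⟩ := Set.Finite.exists_minimalFor id {x : Q | x ≤ a} (Set.toFinite _) ⟨a, le_refl a⟩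
  exact ⟨m, hm, Set.mem_univ m, fun y _ hy => le_antisymm hy (ham (le_trans hy hm) hy)⟩

end Aux

/-- A finite poset `Q` is connected if and only if the union of its sets
of maximal and minimal elements is connected as a subset of `Q`. -/
theorem statement6 (Q : Type) [Fintype Q] [PartialOrder Q] :
    ConnSub (Set.univ : Set Q) ↔ ConnSub (maxOf (Set.univ : Set Q) ∪ minOf (Set.univ : Set Q)) := by
  classical
  set S := maxOf (Set.univ : Set Q) ∪ minOf (Set.univ : Set Q) with hS
  set rU := fun a b : Q => a ∈ (Set.univ : Set Q) ∧ b ∈ (Set.univ : Set Q) ∧ (a ≤ b ∨ b ≤ a)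
  set rS := fun a b : Q => a ∈ S ∧ b ∈ S ∧ (a ≤ b ∨ b ≤ a)
  choose M hMle hMmem using exists_max_above (Q := Q)
  choose N hNle hNmem using exists_min_below (Q := Q)
  have hMS : ∀ a : Q, M a ∈ S := fun a => Or.inl (hMmem a)
  have hNS : ∀ a : Q, N a ∈ S := fun a => Or.inr (hNmem a)
  have key : ∀ a b : Q, Relation.ReflTransGen rU a b →
      Relation.ReflTransGen rS (M a) (M b) := by
    intro a b hab
    induction hab with
    | refl => exact Relation.ReflTransGen.refl
    | tail _ hbc ih =>
      rename_i b c _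
      rcases hbc.2.2 with h | h
      · exact (ih.tail (⟨hMS b, hNS b, Or.inr (le_trans (hNle b) (hMle b))⟩ : rS (M b) (N b))).tail
          (⟨hNS b, hMS c, Or.inl (le_trans (hNle b) (le_trans h (hMle c)))⟩ : rS (N b) (M c))
      · exact (ih.tail (⟨hMS b, hNS c, Or.inr (le_trans (hNle c) (le_trans h (hMle b)))⟩ : rS (M b) (N c))).tail
          (⟨hNS c, hMS c, Or.inl (le_trans (hNle c) (hMle c))⟩ : rS (N c) (M c))
  constructor
  · rintro ⟨⟨a, -⟩, h⟩
    refine ⟨⟨M a, hMS a⟩, ?_⟩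
    intro x hx y hy
    have h1 : Relation.ReflTransGen rS x (M x) :=
      Relation.ReflTransGen.single ⟨hx, hMS x, Or.inl (hMle x)⟩
    have h2 : Relation.ReflTransGen rS (M y) y :=
      Relation.ReflTransGen.single ⟨hMS y, hy, Or.inr (hMle y)⟩
    exact (h1.trans (key x y (h x trivial y trivial))).trans h2
  · rintro ⟨⟨a, -⟩, h⟩
    refine ⟨⟨a, trivial⟩, ?_⟩
    intro x _ y _
    have mono : ∀ {u v : Q}, Relation.ReflTransGen rS u v → Relation.ReflTransGen rU u v := by
      intro u v huv
      exact Relation.ReflTransGen.mono (p := rU) (fun p q (hpq : rS p q) => (⟨trivial, trivial, hpq.2.2⟩ : rU p q)) u v huv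
    have h1 : Relation.ReflTransGen rU x (M x) :=
      Relation.ReflTransGen.single ⟨trivial, trivial, Or.inl (hMle x)⟩
    have h2 : Relation.ReflTransGen rU (M y) y :=
      Relation.ReflTransGen.single ⟨trivial, trivial, Or.inr (hMle y)⟩
    exact (h1.trans (mono (h (M x) (hMS x) (M y) (hMS y)))).trans h2
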